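/- Let f, φ, ψ : ℝ → ℝ with f continuous and non-constant, and suppose f(x + y) = φ(y)·f(x) + ψ(y) for all x, y ∈ ℝ, where φ is not identically 1. Then there exist constants α ≠ 0, γ ≠ 0, c ∈ ℝ such that f(x) = α·e^{γx} + c, φ(x) = e^{γx}, and ψ(x) = c(1 - e^{γx}) for all x. -/

import Mathlib

theorem pexider_exponential {f φ ψ : ℝ → ℝ} (hf : Continuous f)
    (hfnc : ¬ ∃ c : ℝ, ∀ x, f x = c) (hφ : ¬ ∀ x, φ x = 1)
    (heq : ∀ x y : ℝ, f (x + y) = φ y * f x + ψ y) :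
    ∃ α γ c : ℝ, α ≠ 0 ∧ γ ≠ 0 ∧
      (∀ x, f x = α * Real.exp (γ * x) + c) ∧
      (∀ x, φ x = Real.exp (γ * x)) ∧
      (∀ x, ψ x = c * (1 - Real.exp (γ * x))) := by
  push_neg at hfnc hφ
  obtain ⟨a, ha⟩ := hfnc (f 0)
  -- a has f a ≠ f 0
  set b : ℝ := 0 with hb
  have hab : f a - f b ≠ 0 := sub_ne_zero.mpr ha
  -- φ 0 = 1
  have hA := heq a 0
  have hB := heq b 0
  rw [add_zero] at hA hB
  have hφ0 : φ 0 = 1 := by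
    by_contra h
    apply hab
    have : (φ 0 - 1) * (f a - f b) = 0 := by linear_combination hB - hA
    rcases mul_eq_zero.mp this with h' | h'
    · exact absurd (by linarith) h
    · exact absurd h' hab
  have hψ0 : ψ 0 = 0 := by rw [hφ0] at hA; linarith
  -- multiplicativity of φ
  have hmul : ∀ y z : ℝ, φ (y + z) = φ y * φ z := by
    intro y z
    have h1 := heq a (y + z)
    have h2 := heq (a + y) z
    have h3 := heq a y
    have h1' := heq b (y + z)
    have h2' := heq (b + y) z
    have h3' := heq b y
    rw [← add_assoc] at h1 h1'
    have key : (φ (y + z) - φ y * φ z) * (f a - f b) = 0 := by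
      rw [h3] at h2; rw [h3'] at h2'; linear_combination h2 - h1 + h1' - h2'
    rcases mul_eq_zero.mp key with h | h
    · linarith
    · exact absurd h hab
  -- cocycle for ψ
  have hcoc : ∀ y z : ℝ, ψ (y + z) = φ z * ψ y + ψ z := by
    intro y z
    have h1 := heq a (y + z)
    have h2 := heq (a + y) z
    have h3 := heq a y
    rw [← add_assoc] at h1
    rw [h3] at h2
    rw [hmul y z] at h1
    linear_combination h2 - h1
  -- φ never zero
  have hne : ∀ y : ℝ, φ y ≠ 0 := by
    intro y hy
    have := hmul y (-y)
    rw [add_neg_cancel, hφ0, hy] at this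
    simp at this
  -- φ positive
  have hpos : ∀ y : ℝ, 0 < φ y := by
    intro y
    have h := hmul (y / 2) (y / 2)
    rw [add_halves] at h
    rcases lt_or_eq_of_le (mul_self_nonneg (φ (y / 2))) with h' | h'
    · rw [h]; exact h'
    · exact absurd h'.symm (mul_ne_zero (hne _) (hne _))
  -- φ expressed via f, hence continuous
  have hφeq : ∀ y : ℝ, φ y = (f (a + y) - f (b + y)) * (f a - f b)⁻¹ := by
    intro y
    have h1 := heq a y
    have h2 := heq b y
    field_simp
    linear_combination h2 - h1
  have hφcont : Continuous φ := by
    have : Continuous fun y => (f (a + y) - f (b + y)) * (f a - f b)⁻¹ := by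
      fun_prop
    exact (funext hφeq : φ = _) ▸ this
  -- g := log ∘ φ is additive and continuous
  set g : ℝ → ℝ := fun y => Real.log (φ y) with hg
  have hgadd : ∀ y z : ℝ, g (y + z) = g y + g z := by
    intro y z
    simp only [hg, hmul y z, Real.log_mul (hne y) (hne z)]
  have hgcont : Continuous g := by
    rw [continuous_iff_continuousAt]
    intro y
    exact (Real.continuousAt_log (hne y)).comp hφcont.continuousAt
  have hφexp : ∀ y : ℝ, φ y = Real.exp (g y) := fun y =>
    (Real.exp_log (hpos y)).symm
  -- g is linear via toRealLinearMap
  set G : ℝ →+ ℝ := AddMonoidHom.mk' g (fun y z => hgadd y z) with hG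
  have hlin : ∀ y : ℝ, g y = g 1 * y := by
    intro y
    have := (G.toRealLinearMap hgcont).map_smul y (1 : ℝ)
    simpa [smul_eq_mul, mul_comm, hG, AddMonoidHom.coe_toRealLinearMap] using this
  set γ : ℝ := g 1 with hγ
  have hφform : ∀ y : ℝ, φ y = Real.exp (γ * y) := by
    intro y; rw [hφexp y, hlin y]
  have hγ0 : γ ≠ 0 := by
    intro h
    obtain ⟨x₀, hx₀⟩ := hφ
    apply hx₀
    rw [hφform x₀, h, zero_mul, Real.exp_zero]
  -- there is z₀ with φ z₀ ≠ 1
  obtain ⟨z₀, hz₀⟩ := hφ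
  have hz₀' : 1 - φ z₀ ≠ 0 := fun h => hz₀ (by linarith)
  set c : ℝ := ψ z₀ / (1 - φ z₀) with hc
  -- symmetric cocycle: ψ y * (φ z - 1) = ψ z * (φ y - 1)
  have hsym : ∀ y z : ℝ, ψ y * (φ z - 1) = ψ z * (φ y - 1) := by
    intro y z
    have h1 := hcoc y z
    have h2 := hcoc z y
    rw [add_comm z y] at h2
    linear_combination h2 - h1
  have hψform : ∀ y : ℝ, ψ y = c * (1 - φ y) := by
    intro y
    have := hsym y z₀
    rw [hc]
    field_simp
    linear_combination -this
  -- f form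
  set α : ℝ := f 0 - c with hα
  have hfform : ∀ x : ℝ, f x = α * φ x + c := by
    intro x
    have := heq 0 x
    rw [zero_add, hψform x] at this
    rw [hα]; linear_combination this
  have hα0 : α ≠ 0 := by
    intro h
    apply ha
    rw [hfform a, hfform b, h, zero_mul, zero_mul]
  refine ⟨α, γ, c, hα0, hγ0, ?_, ?_, ?_⟩
  · intro x; rw [hfform x, hφform x]
  · intro x; exact hφform x
  · intro x; rw [hψform x, hφform x]
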